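/- Let Ω₁ ⊂ ℍ_s^n be slice-open and real-path-connected, let Ω₂ ⊂ ℍ_s^n be slice-open and Ω₁-stem-preserving, and let f : Ω₂ → ℍ be weakly slice regular. Then for every γ ∈ 𝒫(ℂ^n, Ω₁) and every I ∈ 𝕊(Ω₁, γ), f^c_{Ω₁}(γ^I(1)) = conj(F^{f,1}_{Ω₁}(γ)) + I·conj(F^{f,2}_{Ω₁}(γ)); in other words, the componentwise conjugate F^{f,c}_{Ω₁} := (conj(F^{f,1}_{Ω₁}), conj(F^{f,2}_{Ω₁})) is a path-slice stem function of f^c_{Ω₁}, and in particular f^c_{Ω₁} is path-slice. -/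

import Mathlib

open scoped Quaternion
open Classical

attribute [local instance] Classical.propDecidable

noncomputable section

/-- Continuous-path carrier type: maps from `[0,1]` to `ℂⁿ`. -/
abbrev PathC (n : ℕ) := unitInterval → (Fin n → ℂ)

/-- The sphere of quaternionic imaginary units `𝕊 = {I : I² = -1}`. -/
def SQ : Set ℍ[ℝ] := {I | I ^ 2 = -1}

/-- A quaternion is real if it is the image of a real number. -/
def IsRealQ (p : ℍ[ℝ]) : Prop := ∃ r : ℝ, p = (r : ℍ[ℝ])

/-- `Ψ_i^I : ℂⁿ → ℂ_Iⁿ`, componentwise `x + y i ↦ x + y I`. -/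
def psi {n : ℕ} (I : ℍ[ℝ]) (z : Fin n → ℂ) : Fin n → ℍ[ℝ] :=
  fun k => ((z k).re : ℍ[ℝ]) + (z k).im • I

/-- The slice `ℂ_I = {x + y I}` as a subset of the quaternions. -/
def CI (I : ℍ[ℝ]) : Set ℍ[ℝ] := {p | ∃ x y : ℝ, p = (x : ℍ[ℝ]) + y • I}

/-- The weakly slice cone `ℍ_sⁿ = ⋃_{I ∈ 𝕊} ℂ_Iⁿ`. -/
def HSliceCone (n : ℕ) : Set (Fin n → ℍ[ℝ]) := ⋃ I ∈ SQ, Set.range (psi (n := n) I)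

/-- Membership in `𝒫(ℂⁿ)`: continuous with real initial point. -/
def IsPathP {n : ℕ} (γ : PathC n) : Prop :=
  Continuous γ ∧ ∀ k, ((γ 0) k).im = 0

/-- `γ^I ⊂ Ω`. -/
def pathInSlice {n : ℕ} (Ω : Set (Fin n → ℍ[ℝ])) (I : ℍ[ℝ]) (γ : PathC n) : Prop :=
  ∀ t, psi I (γ t) ∈ Ω

/-- `𝕊(Ω, γ) = {I ∈ 𝕊 : γ^I ⊂ Ω}`. -/
def SGamma {n : ℕ} (Ω : Set (Fin n → ℍ[ℝ])) (γ : PathC n) : Set ℍ[ℝ] :=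
  {I | I ∈ SQ ∧ pathInSlice Ω I γ}

/-- `γ ∈ 𝒫(ℂⁿ, Ω)`. -/
def PathIn {n : ℕ} (Ω : Set (Fin n → ℍ[ℝ])) (γ : PathC n) : Prop :=
  IsPathP γ ∧ ∃ I, I ∈ SGamma Ω γ

/-- `F` is a path-slice stem function of `f` on `Ω`. -/
def IsStem {n : ℕ} (Ω : Set (Fin n → ℍ[ℝ])) (f : (Fin n → ℍ[ℝ]) → ℍ[ℝ])
    (F : PathC n → ℍ[ℝ] × ℍ[ℝ]) : Prop :=
  ∀ γ, PathIn Ω γ → ∀ I ∈ SGamma Ω γ, f (psi I (γ 1)) = (F γ).1 + I * (F γ).2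

/-- `f` is a path-slice function on `Ω`. -/
def PathSlice {n : ℕ} (Ω : Set (Fin n → ℍ[ℝ])) (f : (Fin n → ℍ[ℝ]) → ℍ[ℝ]) : Prop :=
  ∃ F, IsStem Ω f F

/-- `Ω` is real-path-connected. -/
def RealPathConnected {n : ℕ} (Ω : Set (Fin n → ℍ[ℝ])) : Prop :=
  ∀ q ∈ Ω, ∃ γ : PathC n, PathIn Ω γ ∧ ∃ I ∈ SGamma Ω γ, psi I (γ 1) = q

/-- `Ω₂` is `Ω₁`-stem-preserving. -/
def StemPreserving {n : ℕ} (Ω₁ Ω₂ : Set (Fin n → ℍ[ℝ])) : Prop :=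
  (∀ γ : PathC n, PathIn Ω₁ γ → (SGamma Ω₂ γ).Nontrivial) ∧
  (∀ α β : PathC n, PathIn Ω₁ α → PathIn Ω₁ β → α 1 = β 1 →
    ¬ ∃ I, SGamma Ω₂ α ∩ SGamma Ω₂ β = {I})

/-- `Ω` is self-stem-preserving. -/
def SelfStemPreserving {n : ℕ} (Ω : Set (Fin n → ℍ[ℝ])) : Prop :=
  RealPathConnected Ω ∧ StemPreserving Ω Ω

/-- The map `𝕴 : ℍ_sⁿ → 𝕊 ∪ {0}`. -/
def frakI {n : ℕ} (q : Fin n → ℍ[ℝ]) : ℍ[ℝ] :=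
  if h : ∀ k, IsRealQ (q k) then 0
  else
    let k := (Finset.univ.filter fun k => ¬ IsRealQ (q k)).min' (by
      push_neg at h
      obtain ⟨k, hk⟩ := h
      exact ⟨k, Finset.mem_filter.mpr ⟨Finset.mem_univ k, hk⟩⟩)
    ‖q k - ((q k).re : ℍ[ℝ])‖⁻¹ • (q k - ((q k).re : ℍ[ℝ]))

/-- A choice of path-slice stem function of `f` (on paths in `Ω`); by
the results of Dou–Jin–Ren–Yang its restriction to `𝒫(ℂⁿ, Ω₁)` is the canonical `F^f_{Ω₁}`. -/
def stemOf {n : ℕ} (Ω : Set (Fin n → ℍ[ℝ])) (f : (Fin n → ℍ[ℝ]) → ℍ[ℝ]) :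
    PathC n → ℍ[ℝ] × ℍ[ℝ] :=
  Classical.epsilon (IsStem Ω f)

/-- The function `ℱ^f_{Ω₁} : Ω₁ → ℍ²` induced by the stem of `f` (path-slice on `Ω₂`). -/
def scrF {n : ℕ} (Ω₁ Ω₂ : Set (Fin n → ℍ[ℝ])) (f : (Fin n → ℍ[ℝ]) → ℍ[ℝ])
    (q : Fin n → ℍ[ℝ]) : ℍ[ℝ] × ℍ[ℝ] :=
  if ∀ k, IsRealQ (q k) then (f q, 0)
  else stemOf Ω₂ f (Classical.epsilon (fun γ : PathC n =>
    PathIn Ω₁ γ ∧ pathInSlice Ω₁ (frakI q) γ ∧ psi (frakI q) (γ 1) = q))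

/-- The `Ω₁`-slice conjugation `f^c_{Ω₁}`. -/
def sliceConj {n : ℕ} (Ω₁ Ω₂ : Set (Fin n → ℍ[ℝ])) (f : (Fin n → ℍ[ℝ]) → ℍ[ℝ]) :
    (Fin n → ℍ[ℝ]) → ℍ[ℝ] :=
  fun q => star (scrF Ω₁ Ω₂ f q).1 + frakI q * star (scrF Ω₁ Ω₂ f q).2

/-- The `*`-product `g * f` of a path-slice `g : Ω₁ → ℍ` with `f : Ω₂ → ℍ`. -/
def starProdF {n : ℕ} (Ω₁ Ω₂ : Set (Fin n → ℍ[ℝ])) (g f : (Fin n → ℍ[ℝ]) → ℍ[ℝ]) :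
    (Fin n → ℍ[ℝ]) → ℍ[ℝ] :=
  fun q => g q * (scrF Ω₁ Ω₂ f q).1 + frakI q * g q * (scrF Ω₁ Ω₂ f q).2

/-- The symmetrization `f^s_{Ω₁} = f^c_{Ω₁} * f`. -/
def symmF {n : ℕ} (Ω₁ Ω₂ : Set (Fin n → ℍ[ℝ])) (f : (Fin n → ℍ[ℝ]) → ℍ[ℝ]) :
    (Fin n → ℍ[ℝ]) → ℍ[ℝ] :=
  starProdF Ω₁ Ω₂ (sliceConj Ω₁ Ω₂ f) f

/-- The pointwise `*`-product on `ℍ²`. -/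
def starPair (p q : ℍ[ℝ] × ℍ[ℝ]) : ℍ[ℝ] × ℍ[ℝ] :=
  (p.1 * q.1 - p.2 * q.2, p.2 * q.1 + p.1 * q.2)

/-- Slice-open sets: every slice is open (pulled back to `ℂⁿ` via `Ψ_i^I`). -/
def SliceOpen {n : ℕ} (U : Set (Fin n → ℍ[ℝ])) : Prop :=
  ∀ I ∈ SQ, IsOpen {z : Fin n → ℂ | psi I z ∈ U}

/-- Weakly slice regular functions: each slice restriction is left `I`-holomorphic. -/
def SliceRegular {n : ℕ} (Ω : Set (Fin n → ℍ[ℝ])) (f : (Fin n → ℍ[ℝ]) → ℍ[ℝ]) : Prop :=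
  ∀ I ∈ SQ, ∀ z : Fin n → ℂ, psi I z ∈ Ω →
    DifferentiableWithinAt ℝ (fun w => f (psi I w)) {w | psi I w ∈ Ω} z ∧
    ∀ ℓ : Fin n,
      fderivWithin ℝ (fun w => f (psi I w)) {w | psi I w ∈ Ω} z (Pi.single ℓ 1)
        + I * fderivWithin ℝ (fun w => f (psi I w)) {w | psi I w ∈ Ω} z (Pi.single ℓ Complex.I)
        = 0

/-- The ball `B_I(q, r)` inside the slice `ℂ_Iⁿ`. -/
def BI {n : ℕ} (I : ℍ[ℝ]) (q : Fin n → ℍ[ℝ]) (r : ℝ) : Set (Fin n → ℍ[ℝ]) :=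
  {p | p ∈ Set.range (psi (n := n) I) ∧ dist p q < r}

/-- The slice topology. -/
def sliceTop (n : ℕ) : TopologicalSpace (Fin n → ℍ[ℝ]) where
  IsOpen := SliceOpen
  isOpen_univ := by intro I _; simpa using isOpen_univ
  isOpen_inter := by
    intro s t hs ht I hI
    have h : {z : Fin n → ℂ | psi I z ∈ s ∩ t}
        = {z : Fin n → ℂ | psi I z ∈ s} ∩ {z : Fin n → ℂ | psi I z ∈ t} := by
      ext z; simp [Set.mem_inter_iff]
    rw [h]
    exact (hs I hI).inter (ht I hI)
  isOpen_sUnion := by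
    intro S hS I hI
    have h : {z : Fin n → ℂ | psi I z ∈ ⋃₀ S} = ⋃ s ∈ S, {z : Fin n → ℂ | psi I z ∈ s} := by
      ext z; simp
    rw [h]
    exact isOpen_biUnion fun s hs => hS s hs I hI

/-- Slice-domains: nonempty slice-open sets connected in the slice topology. -/
def SliceDomain {n : ℕ} (Ω : Set (Fin n → ℍ[ℝ])) : Prop :=
  SliceOpen Ω ∧ @IsConnected _ (sliceTop n) Ω

/-- Concatenation `γ · ℒ_{γ(1)}^z` of a path with the segment from `γ(1)` to `z`. -/
def concatSeg {n : ℕ} (γ : PathC n) (z : Fin n → ℂ) : PathC n := fun t =>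
  if h : (t : ℝ) ≤ 1 / 2 then
    γ ⟨2 * (t : ℝ), ⟨by linarith [t.2.1], by linarith⟩⟩
  else
    (1 - (2 * (t : ℝ) - 1)) • γ 1 + (2 * (t : ℝ) - 1) • z

/-- The action of `σ` on `ℍ²`: `σ(p₁, p₂) = (-p₂, p₁)`. -/
def sigmaAct (p : ℍ[ℝ] × ℍ[ℝ]) : ℍ[ℝ] × ℍ[ℝ] := (-p.2, p.1)

/-- `F : 𝒫(ℂⁿ, Ω) → ℍ²` is holomorphic at the path `γ`. -/
def StemHoloAt {n : ℕ} (Ω : Set (Fin n → ℍ[ℝ])) (F : PathC n → ℍ[ℝ] × ℍ[ℝ])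
    (γ : PathC n) : Prop :=
  ∃ r > 0, (∀ z ∈ Metric.ball (γ 1) r, PathIn Ω (concatSeg γ z)) ∧
    ∀ z ∈ Metric.ball (γ 1) r,
      DifferentiableAt ℝ (fun w => F (concatSeg γ w)) z ∧
      ∀ ℓ : Fin n,
        fderiv ℝ (fun w => F (concatSeg γ w)) z (Pi.single ℓ 1)
          + sigmaAct (fderiv ℝ (fun w => F (concatSeg γ w)) z (Pi.single ℓ Complex.I)) = 0

/-- `F` is holomorphic (at every path of `𝒫(ℂⁿ, Ω)`). -/
def StemHolo {n : ℕ} (Ω : Set (Fin n → ℍ[ℝ])) (F : PathC n → ℍ[ℝ] × ℍ[ℝ]) : Prop :=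
  ∀ γ, PathIn Ω γ → StemHoloAt Ω F γ

/-- `E` is a complex-analytic subset of the open set `U ⊂ ℂⁿ`. -/
def IsComplexAnalyticSubset {n : ℕ} (U E : Set (Fin n → ℂ)) : Prop :=
  E ⊆ U ∧ ∀ z ∈ U, ∃ V, V ⊆ U ∧ IsOpen V ∧ z ∈ V ∧
    ∃ (m : ℕ) (h : Fin m → (Fin n → ℂ) → ℂ),
      (∀ j, DifferentiableOn ℂ (h j) V) ∧ E ∩ V = {w | w ∈ V ∧ ∀ j, h j w = 0}

/-- `A` is a path-slice analytic subset of the slice-domain `Ω`. -/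
def PathSliceAnalytic {n : ℕ} (Ω A : Set (Fin n → ℍ[ℝ])) : Prop :=
  A = Ω ∨ ∀ γ : PathC n, PathIn Ω γ →
    ∃ r > 0, ∃ rI : ℍ[ℝ] → ℝ, (∀ I ∈ SGamma Ω γ, rI I ∈ Set.Ioc (0 : ℝ) r) ∧
      ∃ E : Set (Fin n → ℂ), IsComplexAnalyticSubset (Metric.ball (γ 1) r) E ∧
        E ≠ Metric.ball (γ 1) r ∧
        ∀ I ∈ SGamma Ω γ, A ∩ BI I (psi I (γ 1)) (rI I) ⊆ psi I '' E


/-! ### Auxiliary material for the proof -/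

namespace CSA

open Quaternion

lemma coe_sq_ne (s : ℝ) : ((s : ℍ[ℝ]) ^ 2 : ℍ[ℝ]) ≠ -1 := by
  intro h
  have h2 : ((s ^ 2 : ℝ) : ℍ[ℝ]) = ((-1 : ℝ) : ℍ[ℝ]) := by
    push_cast
    simpa using h
  have h3 : (s ^ 2 : ℝ) = -1 := Quaternion.coe_injective h2
  nlinarith [sq_nonneg s]

lemma SQ_mul_self {I : ℍ[ℝ]} (hI : I ∈ SQ) : I * I = -1 := by
  have : I ^ 2 = -1 := hI
  rwa [sq] at this

lemma SQ_ne_zero {I : ℍ[ℝ]} (hI : I ∈ SQ) : I ≠ 0 := by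
  intro h
  have h2 : I ^ 2 = -1 := hI
  rw [h] at h2
  norm_num at h2

lemma SQ_neg {I : ℍ[ℝ]} (hI : I ∈ SQ) : -I ∈ SQ := by
  have h2 : I ^ 2 = -1 := hI
  show (-I) ^ 2 = -1
  rwa [neg_sq]

lemma SQ_inv {I : ℍ[ℝ]} (hI : I ∈ SQ) : I⁻¹ = -I := by
  have h : I * (-I) = 1 := by
    have := SQ_mul_self hI
    rw [mul_neg, this]; norm_num
  exact (inv_eq_of_mul_eq_one_right h)

lemma SQ_not_real {I : ℍ[ℝ]} (hI : I ∈ SQ) (s : ℝ) : I ≠ (s : ℍ[ℝ]) := by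
  intro h
  exact coe_sq_ne s (h ▸ hI)

lemma SQ_smul_real {I : ℍ[ℝ]} (hI : I ∈ SQ) {c r : ℝ} (h : c • I = (r : ℍ[ℝ])) :
    c = 0 ∧ r = 0 := by
  by_cases hc : c = 0
  · subst hc
    simp only [zero_smul] at h
    refine ⟨rfl, ?_⟩
    have : ((0:ℝ) : ℍ[ℝ]) = (r : ℍ[ℝ]) := by simpa using h
    exact (Quaternion.coe_injective this).symm
  · exfalso
    have hI2 : I = ((c⁻¹ * r : ℝ) : ℍ[ℝ]) := by
      have h2 := congrArg (fun x => c⁻¹ • x) h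
      simp only [smul_smul, inv_mul_cancel₀ hc, one_smul] at h2
      rw [h2, Quaternion.smul_coe]
    exact SQ_not_real hI _ hI2

lemma SQ_re {I : ℍ[ℝ]} (hI : I ∈ SQ) : I.re = 0 := by
  have h : I * I = -1 := SQ_mul_self hI
  rw [Quaternion.ext_iff] at h
  simp only [Quaternion.re_mul, Quaternion.imI_mul, Quaternion.imJ_mul, Quaternion.imK_mul,
    Quaternion.re_neg, Quaternion.re_one, Quaternion.imI_neg, Quaternion.imI_one,
    Quaternion.imJ_neg, Quaternion.imJ_one, Quaternion.imK_neg, Quaternion.imK_one] at h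
  obtain ⟨h1, h2, h3, h4⟩ := h
  by_contra hre
  have h2' : 2 * (I.re * I.imI) = 0 := by linear_combination h2
  have h3' : 2 * (I.re * I.imJ) = 0 := by linear_combination h3
  have h4' : 2 * (I.re * I.imK) = 0 := by linear_combination h4
  have hi : I.imI = 0 :=
    (mul_eq_zero.1 (by linarith : I.re * I.imI = 0)).resolve_left hre
  have hj : I.imJ = 0 :=
    (mul_eq_zero.1 (by linarith : I.re * I.imJ = 0)).resolve_left hre
  have hk : I.imK = 0 :=
    (mul_eq_zero.1 (by linarith : I.re * I.imK = 0)).resolve_left hre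
  rw [hi, hj, hk] at h1
  nlinarith

lemma SQ_normSq {I : ℍ[ℝ]} (hI : I ∈ SQ) : normSq I = 1 := by
  have h : I * I = -1 := SQ_mul_self hI
  have h2 : normSq I * normSq I = 1 := by
    have := congrArg normSq h
    rw [map_mul] at this
    simpa using this
  have h3 : (0:ℝ) ≤ normSq I := normSq_nonneg
  nlinarith

lemma SQ_norm {I : ℍ[ℝ]} (hI : I ∈ SQ) : ‖I‖ = 1 := by
  have h := SQ_normSq hI
  rw [Quaternion.normSq_eq_norm_mul_self] at h
  nlinarith [norm_nonneg I]

lemma norm_smul_SQ {I : ℍ[ℝ]} (hI : I ∈ SQ) (c : ℝ) : ‖c • I‖ = |c| := by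
  rw [norm_smul, SQ_norm hI, Real.norm_eq_abs, mul_one]

end CSA


namespace CSA

open Quaternion

variable {n : ℕ}

lemma psi_re {I : ℍ[ℝ]} (hI : I ∈ SQ) (z : Fin n → ℂ) (k : Fin n) :
    (psi I z k).re = (z k).re := by
  simp [psi, Quaternion.re_add, Quaternion.re_coe, Quaternion.re_smul, SQ_re hI]

lemma psi_real_eq {I J : ℍ[ℝ]} (z : Fin n → ℂ) (hz : ∀ k, (z k).im = 0) :
    psi I z = psi J z := by
  funext k
  simp [psi, hz k]

lemma psi_inj {I : ℍ[ℝ]} (hI : I ∈ SQ) : Function.Injective (psi (n := n) I) := by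
  intro z w h
  funext k
  have hk := congrFun h k
  simp only [psi] at hk
  have h2' : (z k).im • I - (w k).im • I = (((w k).re : ℝ) : ℍ[ℝ]) - (((z k).re : ℝ) : ℍ[ℝ]) := by
    rw [sub_eq_sub_iff_add_eq_add, add_comm]
    exact hk
  have h2 : ((z k).im - (w k).im) • I = (((w k).re - (z k).re : ℝ) : ℍ[ℝ]) := by
    rw [sub_smul]
    push_cast
    exact h2'
  obtain ⟨h3, h4⟩ := SQ_smul_real hI h2
  apply Complex.ext
  · linarith
  · linarith

lemma psi_conj (I : ℍ[ℝ]) (z : Fin n → ℂ) :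
    psi I (fun k => (starRingEnd ℂ) (z k)) = psi (-I) z := by
  funext k
  simp [psi, smul_neg]

lemma isRealQ_psi_iff {I : ℍ[ℝ]} (hI : I ∈ SQ) (z : Fin n → ℂ) (k : Fin n) :
    IsRealQ (psi I z k) ↔ (z k).im = 0 := by
  constructor
  · rintro ⟨r, hr⟩
    simp only [psi] at hr
    have h2 : (z k).im • I = ((r - (z k).re : ℝ) : ℍ[ℝ]) := by
      push_cast
      exact eq_sub_of_add_eq' hr
    exact (SQ_smul_real hI h2).1
  · intro h
    exact ⟨(z k).re, by simp [psi, h]⟩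

lemma frakI_psi {I : ℍ[ℝ]} (hI : I ∈ SQ) (z : Fin n → ℂ)
    (hz : ¬ ∀ k, IsRealQ (psi I z k)) :
    frakI (psi I z) = I ∨ frakI (psi I z) = -I := by
  have key : ∀ k : Fin n, (z k).im ≠ 0 →
      (‖psi I z k - ((psi I z k).re : ℍ[ℝ])‖⁻¹ • (psi I z k - ((psi I z k).re : ℍ[ℝ])) = I ∨
       ‖psi I z k - ((psi I z k).re : ℍ[ℝ])‖⁻¹ • (psi I z k - ((psi I z k).re : ℍ[ℝ])) = -I) := by
    intro k him
    have hsub : psi I z k - ((psi I z k).re : ℍ[ℝ]) = (z k).im • I := by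
      rw [psi_re hI]
      simp [psi]
    rw [hsub, norm_smul_SQ hI, smul_smul]
    rcases him.lt_or_gt with hlt | hlt
    · right
      rw [abs_of_neg hlt]
      rw [show (-(z k).im)⁻¹ * (z k).im = -1 by field_simp]
      simp
    · left
      rw [abs_of_pos hlt]
      rw [show ((z k).im)⁻¹ * (z k).im = 1 by field_simp]
      simp
  have hne : (Finset.univ.filter fun k => ¬ IsRealQ (psi I z k)).Nonempty := by
    push_neg at hz
    obtain ⟨k, hk⟩ := hz
    exact ⟨k, Finset.mem_filter.mpr ⟨Finset.mem_univ k, hk⟩⟩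
  have hknr : ¬ IsRealQ (psi I z ((Finset.univ.filter
      fun k => ¬ IsRealQ (psi I z k)).min' hne)) :=
    (Finset.mem_filter.1 (Finset.min'_mem _ hne)).2
  have him : (z ((Finset.univ.filter fun k => ¬ IsRealQ (psi I z k)).min' hne)).im ≠ 0 :=
    fun h => hknr ((isRealQ_psi_iff hI z _).2 h)
  rw [frakI, dif_neg hz]
  exact key _ him

lemma pair_eq_of_two {F₁ F₂ G₁ G₂ J J' : ℍ[ℝ]} (hJJ' : J ≠ J')
    (h1 : F₁ + J * F₂ = G₁ + J * G₂) (h2 : F₁ + J' * F₂ = G₁ + J' * G₂) :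
    F₁ = G₁ ∧ F₂ = G₂ := by
  have e1 : J * F₂ - J * G₂ = G₁ - F₁ := by
    rw [sub_eq_sub_iff_add_eq_add, add_comm]
    exact h1
  have e2 : J' * F₂ - J' * G₂ = G₁ - F₁ := by
    rw [sub_eq_sub_iff_add_eq_add, add_comm]
    exact h2
  have h3 : (J - J') * (F₂ - G₂) = 0 := by
    rw [sub_mul, mul_sub, mul_sub, e1, e2, sub_self]
  have h4 : F₂ = G₂ := by
    rcases mul_eq_zero.1 h3 with h | h
    · exact absurd (sub_eq_zero.1 h) hJJ'
    · exact sub_eq_zero.1 h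
  refine ⟨?_, h4⟩
  rw [h4] at h1
  exact add_right_cancel h1

end CSA


namespace CSA

open Quaternion
open scoped Topology

/-- The ring embedding `ℂ →+* ℍ` sending `i` to `K`. -/
def iotaKHom (K : ℍ[ℝ]) (hK : K ^ 2 = -1) : ℂ →+* ℍ[ℝ] where
  toFun z := ((z.re : ℝ) : ℍ[ℝ]) + z.im • K
  map_one' := by simp
  map_mul' z w := by
    have h2 : K * K = -1 := by rw [← sq]; exact hK
    have hre : K.re = 0 := SQ_re hK
    have hsq : K.imI ^ 2 + K.imJ ^ 2 + K.imK ^ 2 = 1 := by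
      have h3 := congrArg QuaternionAlgebra.re h2
      simp only [Quaternion.re_mul, Quaternion.re_neg, Quaternion.re_one, hre] at h3
      nlinarith [h3]
    rw [Quaternion.ext_iff]
    refine ⟨?_, ?_, ?_, ?_⟩ <;>
      simp only [Quaternion.re_mul, Quaternion.imI_mul, Quaternion.imJ_mul, Quaternion.imK_mul,
        Quaternion.re_add, Quaternion.imI_add, Quaternion.imJ_add, Quaternion.imK_add,
        Quaternion.re_coe, Quaternion.imI_coe, Quaternion.imJ_coe, Quaternion.imK_coe,
        Quaternion.re_smul, Quaternion.imI_smul, Quaternion.imJ_smul, Quaternion.imK_smul,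
        smul_eq_mul, Complex.mul_re, Complex.mul_im, hre]
    · linear_combination (z.im * w.im) * hsq
    · ring
    · ring
    · ring
  map_zero' := by simp
  map_add' z w := by
    simp only [Complex.add_re, Complex.add_im]
    push_cast
    rw [add_smul]
    abel

lemma iotaKHom_apply (K : ℍ[ℝ]) (hK : K ^ 2 = -1) (z : ℂ) :
    iotaKHom K hK z = ((z.re : ℝ) : ℍ[ℝ]) + z.im • K := rfl

lemma norm_iotaKHom (K : ℍ[ℝ]) (hK : K ^ 2 = -1) (z : ℂ) :
    ‖iotaKHom K hK z‖ = ‖z‖ := by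
  have hre : K.re = 0 := SQ_re hK
  have hns : normSq K = 1 := SQ_normSq hK
  have h1 : normSq (iotaKHom K hK z) = z.re ^ 2 + z.im ^ 2 := by
    rw [iotaKHom_apply]
    rw [Quaternion.normSq_def']
    simp only [Quaternion.re_add, Quaternion.imI_add, Quaternion.imJ_add, Quaternion.imK_add,
      Quaternion.re_coe, Quaternion.imI_coe, Quaternion.imJ_coe, Quaternion.imK_coe,
      Quaternion.re_smul, Quaternion.imI_smul, Quaternion.imJ_smul, Quaternion.imK_smul,
      smul_eq_mul, hre]
    rw [Quaternion.normSq_def'] at hns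
    rw [hre] at hns
    nlinarith [hns]
  have h2 : ‖iotaKHom K hK z‖ * ‖iotaKHom K hK z‖ = ‖z‖ * ‖z‖ := by
    rw [← Quaternion.normSq_eq_norm_mul_self, h1, ← sq, ← Complex.normSq_eq_norm_sq,
      Complex.normSq_apply]
    ring
  nlinarith [norm_nonneg (iotaKHom K hK z), norm_nonneg z]

/-- The key one-variable identity theorem: a `K`-holomorphic function on a preconnected
open set vanishing frequently near a point vanishes identically. -/
lemma slice_identity {K : ℍ[ℝ]} (hK : K ^ 2 = -1) {φ : ℂ → ℍ[ℝ]} {U : Set ℂ}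
    (hU : IsOpen U) (hUc : IsPreconnected U)
    (hdiff : ∀ u ∈ U, DifferentiableAt ℝ φ u)
    (hCR : ∀ u ∈ U, fderiv ℝ φ u Complex.I = K * fderiv ℝ φ u 1)
    {a : ℂ} (ha : a ∈ U) (hfreq : ∃ᶠ u in nhdsWithin a {a}ᶜ, φ u = 0) :
    Set.EqOn φ 0 U := by
  letI : Module ℂ ℍ[ℝ] := Module.compHom ℍ[ℝ] (iotaKHom K hK)
  have hsmul : ∀ (z : ℂ) (q : ℍ[ℝ]), z • q = iotaKHom K hK z * q := fun _ _ => rfl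
  letI : NormedSpace ℂ ℍ[ℝ] :=
    { norm_smul_le := fun z q => by
        rw [hsmul, norm_mul, norm_iotaKHom] }
  have hdC : DifferentiableOn ℂ φ U := by
    intro u hu
    have h1 : HasFDerivAt φ (fderiv ℝ φ u) u := (hdiff u hu).hasFDerivAt
    set L := fderiv ℝ φ u with hL
    let L' : ℂ →L[ℂ] ℍ[ℝ] :=
      ContinuousLinearMap.smulRight (ContinuousLinearMap.id ℂ ℂ) (L 1)
    have hfun : ∀ v : ℂ, L' v = L v := by
      intro v
      have hv : v = v.re • (1 : ℂ) + v.im • Complex.I := by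
        simp [Complex.ext_iff]
      have hlv : L v = v.re • L 1 + v.im • L Complex.I := by
        conv_lhs => rw [hv]
        rw [map_add, map_smul, map_smul]
      have hlv' : L' v = v • L 1 := rfl
      rw [hlv', hsmul, hlv, hCR u hu, iotaKHom_apply]
      rw [add_mul, Quaternion.coe_mul_eq_smul, smul_mul_assoc]
    have hC : HasFDerivAt (𝕜 := ℂ) φ L' u := by
      rw [hasFDerivAt_iff_isLittleO_nhds_zero]
      have h2 := hasFDerivAt_iff_isLittleO_nhds_zero.1 h1
      simpa only [hfun] using h2
    exact hC.differentiableAt.differentiableWithinAt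
  exact (hdC.analyticOnNhd hU).eqOn_zero_of_preconnected_of_frequently_eq_zero hUc ha hfreq

end CSA


namespace CSA

open Quaternion Metric
open scoped Topology

variable {n : ℕ}

/-- `h` is (left) `K`-holomorphic on `W`. -/
def KHoloOn (K : ℍ[ℝ]) (h : (Fin n → ℂ) → ℍ[ℝ]) (W : Set (Fin n → ℂ)) : Prop :=
  ∀ z ∈ W, DifferentiableAt ℝ h z ∧
    ∀ ℓ : Fin n, fderiv ℝ h z (Pi.single ℓ Complex.I) = K * fderiv ℝ h z (Pi.single ℓ 1)

/-- Propagation of vanishing through a polydisc, one coordinate at a time. -/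
lemma stepping {K : ℍ[ℝ]} (hK : K ^ 2 = -1) {h : (Fin n → ℂ) → ℍ[ℝ]}
    {W : Set (Fin n → ℂ)} (hW : IsOpen W) (hh : KHoloOn K h W)
    {c : Fin n → ℂ} {r : ℝ} (hr : 0 < r) (hball : Metric.ball c r ⊆ W)
    {D : Fin n → Set ℂ} (hD : ∀ k, D k ⊆ Metric.ball (c k) r)
    (hacc : ∀ k, ∃ a ∈ Metric.ball (c k) r, ∃ᶠ u in nhdsWithin a {a}ᶜ, u ∈ D k)
    (hseed : ∀ z : Fin n → ℂ, (∀ k, z k ∈ D k) → h z = 0) :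
    ∀ z ∈ Metric.ball c r, h z = 0 := by
  suffices H : ∀ m : ℕ, ∀ z : Fin n → ℂ, (∀ k, z k ∈ Metric.ball (c k) r) →
      (∀ k : Fin n, m ≤ (k : ℕ) → z k ∈ D k) → h z = 0 by
    intro z hz
    refine H n z (fun k => lt_of_le_of_lt (dist_le_pi_dist z c k) (Metric.mem_ball.1 hz)) ?_
    intro k hk
    exact absurd hk (not_le.2 k.isLt)
  intro m
  induction m with
  | zero =>
    intro z hz hD'
    exact hseed z (fun k => hD' k (Nat.zero_le _))
  | succ m ih =>
    intro z hz hzD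
    by_cases hm : m < n
    case neg =>
      refine ih z hz (fun k hk => ?_)
      exact absurd (le_trans (not_lt.1 hm) hk) (not_le.2 k.isLt)
    case pos =>
    set ℓ : Fin n := ⟨m, hm⟩ with hℓdef
    have hz_in_W : ∀ u ∈ Metric.ball (c ℓ) r, Function.update z ℓ u ∈ Metric.ball c r := by
      intro u hu
      rw [Metric.mem_ball, dist_pi_lt_iff hr]
      intro k
      rcases eq_or_ne k ℓ with hkℓ | hkℓ
      · subst hkℓ
        simpa [Function.update_self] using Metric.mem_ball.1 hu
      · rw [Function.update_of_ne hkℓ]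
        exact Metric.mem_ball.1 (hz k)
    set φ : ℂ → ℍ[ℝ] := fun u => h (Function.update z ℓ u) with hφdef
    set Lsing : ℂ →L[ℝ] (Fin n → ℂ) :=
      ContinuousLinearMap.pi (fun k : Fin n =>
        if k = ℓ then ContinuousLinearMap.id ℝ ℂ else 0) with hLsing
    have hLs : ∀ v : ℂ, Lsing v = Pi.single ℓ v := by
      intro v
      funext k
      rw [hLsing, ContinuousLinearMap.pi_apply]
      rcases eq_or_ne k ℓ with hkℓ | hkℓ
      · subst hkℓ
        simp
      · simp [hkℓ, Pi.single_eq_of_ne hkℓ]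
    have hAeq : (fun v : ℂ => Function.update z ℓ v)
        = fun v => (z - Pi.single ℓ (z ℓ)) + Lsing v := by
      funext v k
      rw [hLs]
      rcases eq_or_ne k ℓ with hkℓ | hkℓ
      · subst hkℓ
        simp
      · simp [Function.update_of_ne hkℓ, Pi.single_eq_of_ne hkℓ]
    have hkey : ∀ u ∈ Metric.ball (c ℓ) r, DifferentiableAt ℝ φ u ∧
        fderiv ℝ φ u Complex.I = K * fderiv ℝ φ u 1 := by
      intro u hu
      have hWu : Function.update z ℓ u ∈ W := hball (hz_in_W u hu)
      obtain ⟨hdiff, hCR⟩ := hh _ hWu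
      have hA : HasFDerivAt (fun v : ℂ => Function.update z ℓ v) Lsing u := by
        rw [hAeq]
        exact (Lsing.hasFDerivAt).const_add _
      have hcomp : HasFDerivAt φ
          ((fderiv ℝ h (Function.update z ℓ u)).comp Lsing) u :=
        (hdiff.hasFDerivAt).comp u hA
      refine ⟨hcomp.differentiableAt, ?_⟩
      rw [hcomp.fderiv]
      simp only [ContinuousLinearMap.coe_comp', Function.comp_apply, hLs]
      exact hCR ℓ
    obtain ⟨a, haU, hafreq⟩ := hacc ℓ
    have hphi0 : Set.EqOn φ 0 (Metric.ball (c ℓ) r) := by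
      refine slice_identity hK Metric.isOpen_ball (convex_ball _ _).isPreconnected
        (fun u hu => (hkey u hu).1) (fun u hu => (hkey u hu).2) haU ?_
      refine hafreq.mono (fun u hu => ?_)
      refine ih (Function.update z ℓ u) ?_ ?_
      · intro k
        rcases eq_or_ne k ℓ with hkℓ | hkℓ
        · subst hkℓ
          simpa [Function.update_self] using hD ℓ hu
        · rw [Function.update_of_ne hkℓ]
          exact hz k
      · intro k hk
        rcases eq_or_ne k ℓ with hkℓ | hkℓ
        · subst hkℓ
          simpa [Function.update_self] using hu
        · rw [Function.update_of_ne hkℓ]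
          refine hzD k ?_
          have hne : (k : ℕ) ≠ m := fun he => hkℓ (Fin.ext he)
          omega
    have hfin : φ (z ℓ) = 0 := hphi0 (hz ℓ)
    rw [hφdef] at hfin
    simpa [Function.update_eq_self] using hfin

/-- Frequent real points near a real point of `ℂ`. -/
lemma freq_real (a : ℂ) (ha : a.im = 0) {ρ : ℝ} (hρ : 0 < ρ) :
    ∃ᶠ u in nhdsWithin a {a}ᶜ, u.im = 0 ∧ u ∈ Metric.ball a ρ := by
  rw [Metric.nhdsWithin_basis_ball.frequently_iff]
  intro ε hε
  set x := min ε ρ / 2 with hx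
  have hx0 : 0 < x := by positivity
  refine ⟨a + (x : ℂ), ⟨?_, ?_⟩, ?_, ?_⟩
  · rw [Metric.mem_ball, Complex.dist_eq, add_sub_cancel_left, Complex.norm_of_nonneg hx0.le,
      hx]
    have := min_le_left ε ρ
    linarith
  · intro hmem
    rw [Set.mem_singleton_iff, add_eq_left] at hmem
    rw [Complex.ext_iff] at hmem
    simp only [Complex.ofReal_re, Complex.zero_re] at hmem
    exact hx0.ne' hmem.1
  · simp [ha]
  · rw [Metric.mem_ball, Complex.dist_eq, add_sub_cancel_left, Complex.norm_of_nonneg hx0.le,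
      hx]
    have := min_le_right ε ρ
    linarith

/-- Frequent membership of a small ball near its center. -/
lemma freq_ball (a : ℂ) {ρ : ℝ} (hρ : 0 < ρ) :
    ∃ᶠ u in nhdsWithin a {a}ᶜ, u ∈ Metric.ball a ρ := by
  have h1 : ∀ᶠ u in 𝓝 a, u ∈ Metric.ball a ρ := Metric.ball_mem_nhds a hρ
  exact (eventually_nhdsWithin_of_eventually_nhds h1).frequently

/-- The continuation lemma: a `K`-holomorphic function vanishing on the real points
of `W` vanishes at the endpoint of any path in `W` starting at a real point. -/
lemma continuation {K : ℍ[ℝ]} (hK : K ^ 2 = -1) {h : (Fin n → ℂ) → ℍ[ℝ]}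
    {W : Set (Fin n → ℂ)} (hW : IsOpen W) (hh : KHoloOn K h W)
    (hreal : ∀ z ∈ W, (∀ k, (z k).im = 0) → h z = 0)
    (γ : PathC n) (hγc : Continuous γ) (hγ0 : ∀ k, (γ 0 k).im = 0)
    (hγW : ∀ t, γ t ∈ W) : h (γ 1) = 0 := by
  set Z : Set (Fin n → ℂ) :=
    {z | ∃ r > 0, Metric.ball z r ⊆ W ∧ Set.EqOn h 0 (Metric.ball z r)} with hZdef
  have hZ0 : ∀ z ∈ Z, h z = 0 := by
    rintro z ⟨r, hr, _, h0⟩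
    exact h0 (Metric.mem_ball_self hr)
  -- spreading within a ball
  have spread : ∀ c : Fin n → ℂ, ∀ r : ℝ, 0 < r → Metric.ball c r ⊆ W →
      ∀ z' ∈ Metric.ball c r, z' ∈ Z → Set.EqOn h 0 (Metric.ball c r) := by
    intro c r hr hballW z' hz'ball hz'Z
    obtain ⟨δ, hδ, _, hδ0⟩ := hz'Z
    set δ₀ := min δ (r - dist z' c) with hδ₀def
    have hdz : dist z' c < r := Metric.mem_ball.1 hz'ball
    have hδ₀pos : 0 < δ₀ := lt_min hδ (by linarith)
    intro z hz
    refine stepping hK hW hh hr hballW (D := fun k => Metric.ball (z' k) δ₀) ?_ ?_ ?_ z hz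
    · intro k u hu
      rw [Metric.mem_ball] at hu ⊢
      calc dist u (c k) ≤ dist u (z' k) + dist (z' k) (c k) := dist_triangle _ _ _
        _ ≤ dist u (z' k) + dist z' c := by linarith [dist_le_pi_dist z' c k]
        _ < δ₀ + dist z' c := by linarith
        _ ≤ (r - dist z' c) + dist z' c := by linarith [min_le_right δ (r - dist z' c)]
        _ = r := by ring
    · intro k
      refine ⟨z' k, ?_, freq_ball _ hδ₀pos⟩
      exact Metric.mem_ball.1 (lt_of_le_of_lt (by simpa using dist_le_pi_dist z' c k) hdz)
    · intro w hw
      refine hδ0 ?_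
      have hww : dist w z' < δ₀ := (dist_pi_lt_iff hδ₀pos).2 (fun k => Metric.mem_ball.1 (hw k))
      exact Metric.mem_ball.2 (lt_of_lt_of_le hww (min_le_left _ _))
  -- real points are in Z
  have hrealZ : ∀ z ∈ W, (∀ k, (z k).im = 0) → z ∈ Z := by
    intro z hzW hzreal
    obtain ⟨r, hr, hballW⟩ := Metric.isOpen_iff.1 hW z hzW
    refine ⟨r, hr, hballW, ?_⟩
    intro w hw
    refine stepping hK hW hh hr hballW
      (D := fun k => {u | u.im = 0} ∩ Metric.ball (z k) r) ?_ ?_ ?_ w hw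
    · exact fun k => Set.inter_subset_right
    · intro k
      exact ⟨z k, Metric.mem_ball_self hr, freq_real (z k) (hzreal k) hr⟩
    · intro w' hw'
      refine hreal w' ?_ (fun k => (hw' k).1)
      refine hballW (Metric.mem_ball.2 ((dist_pi_lt_iff hr).2 (fun k => ?_)))
      exact Metric.mem_ball.1 (hw' k).2
  -- the clopen argument on the unit interval
  set T : Set unitInterval := {t | γ t ∈ Z} with hTdef
  have hTopen : IsOpen T := by
    rw [isOpen_iff_mem_nhds]
    intro t ht
    obtain ⟨r, hr, hballW, h0⟩ := ht
    have hmem : γ ⁻¹' (Metric.ball (γ t) (r / 2)) ∈ 𝓝 t :=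
      hγc.continuousAt.preimage_mem_nhds (Metric.ball_mem_nhds _ (half_pos hr))
    refine Filter.mem_of_superset hmem ?_
    intro s hs
    refine ⟨r / 2, half_pos hr, ?_, ?_⟩
    · refine Set.Subset.trans ?_ hballW
      exact (Metric.ball_subset_ball' (by
        have := Metric.mem_ball.1 hs
        linarith))
    · intro w hw
      refine h0 ?_
      have h1 := Metric.mem_ball.1 hw
      have h2 := Metric.mem_ball.1 hs
      exact Metric.mem_ball.2 (by
        calc dist w (γ t) ≤ dist w (γ s) + dist (γ s) (γ t) := dist_triangle _ _ _
          _ < r / 2 + r / 2 := by linarith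
          _ = r := by ring)
  have hTclosed : IsClosed T := by
    refine isClosed_of_closure_subset ?_
    intro t ht
    obtain ⟨r, hr, hballW⟩ := Metric.isOpen_iff.1 hW _ (hγW t)
    have hmem : γ ⁻¹' (Metric.ball (γ t) r) ∈ 𝓝 t :=
      hγc.continuousAt.preimage_mem_nhds (Metric.ball_mem_nhds _ hr)
    obtain ⟨s, hsV, hsT⟩ := mem_closure_iff_nhds.1 ht _ hmem
    exact ⟨r, hr, hballW, spread (γ t) r hr hballW (γ s) hsV hsT⟩
  have h0T : (0 : unitInterval) ∈ T := hrealZ (γ 0) (hγW 0) hγ0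
  have hT : T = Set.univ := IsClopen.eq_univ ⟨hTclosed, hTopen⟩ ⟨0, h0T⟩
  have h1T : (1 : unitInterval) ∈ T := hT ▸ Set.mem_univ _
  exact hZ0 _ h1T

end CSA


namespace CSA

open Quaternion
open scoped Topology

variable {n : ℕ}

set_option maxHeartbeats 1000000 in
set_option synthInstance.maxHeartbeats 200000 in
/-- The representation formula along a path, for a weakly slice regular function. -/
lemma rep_along_path {Ω : Set (Fin n → ℍ[ℝ])} (hΩ : SliceOpen Ω)
    {f : (Fin n → ℍ[ℝ]) → ℍ[ℝ]} (hf : SliceRegular Ω f)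
    {γ : PathC n} (hγ : IsPathP γ) {I J K : ℍ[ℝ]}
    (hI : I ∈ SGamma Ω γ) (hJ : J ∈ SGamma Ω γ) (hKm : K ∈ SGamma Ω γ) (hIJ : I ≠ J) :
    f (psi K (γ 1)) =
      (f (psi I (γ 1)) - I * ((I - J)⁻¹ * (f (psi I (γ 1)) - f (psi J (γ 1)))))
      + K * ((I - J)⁻¹ * (f (psi I (γ 1)) - f (psi J (γ 1)))) := by
  have hII : I * I = -1 := SQ_mul_self hI.1
  have hJJ : J * J = -1 := SQ_mul_self hJ.1
  have hKK : K * K = -1 := SQ_mul_self hKm.1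
  have hS : I - J ≠ 0 := sub_ne_zero.2 hIJ
  have hprep : ∀ L : ℍ[ℝ], L ∈ SGamma Ω γ →
      ∀ z ∈ {w : Fin n → ℂ | psi L w ∈ Ω},
        DifferentiableAt ℝ (fun w => f (psi L w)) z ∧
        ∀ ℓ : Fin n, fderiv ℝ (fun w => f (psi L w)) z (Pi.single ℓ Complex.I)
          = L * fderiv ℝ (fun w => f (psi L w)) z (Pi.single ℓ 1) := by
    intro L hL z hz
    have hWL : IsOpen {w : Fin n → ℂ | psi L w ∈ Ω} := hΩ L hL.1
    obtain ⟨hd, hcr⟩ := hf L hL.1 z hz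
    have hd' : DifferentiableAt ℝ (fun w => f (psi L w)) z :=
      hd.differentiableAt (hWL.mem_nhds hz)
    refine ⟨hd', ?_⟩
    intro ℓ
    have hcr' := hcr ℓ
    rw [fderivWithin_of_isOpen hWL hz] at hcr'
    set a := fderiv ℝ (fun w => f (psi L w)) z (Pi.single ℓ 1) with ha
    set b := fderiv ℝ (fun w => f (psi L w)) z (Pi.single ℓ Complex.I) with hb
    have hLL : L * L = -1 := SQ_mul_self hL.1
    have h2 : L * a + (L * L) * b = 0 := by
      rw [mul_assoc, ← mul_add, hcr', mul_zero]
    rw [hLL, neg_one_mul, ← sub_eq_add_neg] at h2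
    exact (sub_eq_zero.1 h2).symm
  set cc : ℍ[ℝ] := (I - J)⁻¹ with hccdef
  set h : (Fin n → ℂ) → ℍ[ℝ] := fun z =>
    f (psi K z) - ((f (psi I z) - I * (cc * (f (psi I z) - f (psi J z))))
      + K * (cc * (f (psi I z) - f (psi J z)))) with hhdef
  set W : Set (Fin n → ℂ) :=
    {w | psi I w ∈ Ω} ∩ ({w | psi J w ∈ Ω} ∩ {w | psi K w ∈ Ω}) with hWdef
  have hWopen : IsOpen W := (hΩ I hI.1).inter ((hΩ J hJ.1).inter (hΩ K hKm.1))
  have hcancel : ∀ X : ℍ[ℝ], (I - J) * (cc * X) = X := fun X => by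
    rw [hccdef, ← mul_assoc, mul_inv_cancel₀ hS, one_mul]
  have key0 : (I - J) * I = -(J * (I - J)) := by
    rw [sub_mul, mul_sub, hII, hJJ]
    abel
  have hKH : KHoloOn K h W := by
    intro z hz
    obtain ⟨hdI, hcrI⟩ := hprep I hI z hz.1
    obtain ⟨hdJ, hcrJ⟩ := hprep J hJ z hz.2.1
    obtain ⟨hdK, hcrK⟩ := hprep K hKm z hz.2.2
    set DI := fderiv ℝ (fun w => f (psi I w)) z with hDI
    set DJ := fderiv ℝ (fun w => f (psi J w)) z with hDJ
    set DK := fderiv ℝ (fun w => f (psi K w)) z with hDK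
    have hF2 : HasFDerivAt (fun z => cc * (f (psi I z) - f (psi J z)))
        (cc • (DI - DJ)) z := (hdI.hasFDerivAt.sub hdJ.hasFDerivAt).const_mul cc
    have hH : HasFDerivAt h
        (DK - ((DI - I • (cc • (DI - DJ))) + K • (cc • (DI - DJ)))) z := by
      rw [hhdef]
      exact hdK.hasFDerivAt.sub
        ((hdI.hasFDerivAt.sub (hF2.const_mul I)).add (hF2.const_mul K))
    refine ⟨hH.differentiableAt, ?_⟩
    intro ℓ
    rw [hH.fderiv]
    simp only [ContinuousLinearMap.sub_apply, ContinuousLinearMap.add_apply,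
      ContinuousLinearMap.smul_apply, smul_eq_mul]
    rw [hcrI ℓ, hcrJ ℓ, hcrK ℓ]
    set a := DI (Pi.single ℓ 1) with hadef
    set b := DJ (Pi.single ℓ 1) with hbdef
    set c0 := DK (Pi.single ℓ 1) with hc0def
    have key1 : cc * (I * a - J * b) = a - I * (cc * (a - b)) := by
      apply mul_left_cancel₀ hS
      rw [hcancel]
      rw [mul_sub (I - J), ← mul_assoc (I - J) I, key0, neg_mul, mul_assoc J, hcancel]
      rw [sub_mul, mul_sub J]
      abel
    rw [key1]
    set u := cc * (a - b) with hu
    simp only [mul_sub, mul_add, ← mul_assoc, hII, hKK, neg_one_mul]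
    abel
  have hreal : ∀ z ∈ W, (∀ k, (z k).im = 0) → h z = 0 := by
    intro z hzW hzr
    rw [hhdef]
    have e1 : psi J z = psi I z := psi_real_eq z hzr
    have e2 : psi K z = psi I z := psi_real_eq z hzr
    simp [e1, e2]
  have hγW : ∀ t, γ t ∈ W := fun t => ⟨hI.2 t, hJ.2 t, hKm.2 t⟩
  have hfin : h (γ 1) = 0 := continuation hKm.1 hWopen hKH hreal γ hγ.1 hγ.2 hγW
  simp only [hhdef] at hfin
  exact sub_eq_zero.1 hfin

/-- Weakly slice regular functions are path-slice. -/
lemma exists_stem {Ω : Set (Fin n → ℍ[ℝ])} (hΩ : SliceOpen Ω)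
    {f : (Fin n → ℍ[ℝ]) → ℍ[ℝ]} (hf : SliceRegular Ω f) : PathSlice Ω f := by
  refine ⟨fun γ => if h : ∃ p : ℍ[ℝ] × ℍ[ℝ], ∀ L ∈ SGamma Ω γ,
      f (psi L (γ 1)) = p.1 + L * p.2 then h.choose else (0, 0), ?_⟩
  intro γ hγ L hL
  have hex : ∃ p : ℍ[ℝ] × ℍ[ℝ], ∀ L' ∈ SGamma Ω γ,
      f (psi L' (γ 1)) = p.1 + L' * p.2 := by
    by_cases hnt : (SGamma Ω γ).Nontrivial
    · obtain ⟨I, hI, J, hJ, hIJ⟩ := hnt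
      refine ⟨(f (psi I (γ 1)) - I * ((I - J)⁻¹ * (f (psi I (γ 1)) - f (psi J (γ 1)))),
        (I - J)⁻¹ * (f (psi I (γ 1)) - f (psi J (γ 1)))), ?_⟩
      intro L' hL'
      exact rep_along_path hΩ hf hγ.1 hI hJ hL' hIJ
    · refine ⟨(f (psi L (γ 1)), 0), ?_⟩
      intro L' hL'
      have hLL' : L' = L := (Set.not_nontrivial_iff.1 hnt) hL' hL
      rw [hLL', mul_zero, add_zero]
  simp only [dif_pos hex]
  exact hex.choose_spec L hL

/-- The chosen stem `stemOf` really is a stem, for slice regular `f`. -/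
lemma stemOf_spec {Ω : Set (Fin n → ℍ[ℝ])} (hΩ : SliceOpen Ω)
    {f : (Fin n → ℍ[ℝ]) → ℍ[ℝ]} (hf : SliceRegular Ω f) :
    IsStem Ω f (stemOf Ω f) :=
  Classical.epsilon_spec (exists_stem hΩ hf)

end CSA


namespace CSA

open Quaternion Set
open scoped Topology

variable {n : ℕ}

/-- The componentwise conjugate path. -/
def cpath (γ : PathC n) : PathC n := fun t k => (starRingEnd ℂ) (γ t k)

lemma psi_cpath (I : ℍ[ℝ]) (γ : PathC n) (t : unitInterval) :
    psi I (cpath γ t) = psi (-I) (γ t) :=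
  psi_conj I (γ t)

lemma mem_sgamma_cpath {Ω : Set (Fin n → ℍ[ℝ])} {γ : PathC n} {J : ℍ[ℝ]} :
    J ∈ SGamma Ω (cpath γ) ↔ -J ∈ SGamma Ω γ := by
  constructor
  · rintro ⟨hSQ, hsl⟩
    refine ⟨SQ_neg hSQ, fun t => ?_⟩
    have h := hsl t
    rwa [psi_cpath] at h
  · rintro ⟨hSQ, hsl⟩
    have hSQ' : J ∈ SQ := by
      have := SQ_neg hSQ
      rwa [neg_neg] at this
    refine ⟨hSQ', fun t => ?_⟩
    rw [psi_cpath]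
    exact hsl t

lemma isPathP_cpath {γ : PathC n} (hγ : IsPathP γ) : IsPathP (cpath γ) := by
  constructor
  · apply continuous_pi
    intro k
    simp only [cpath, starRingEnd_apply]
    exact continuous_star.comp ((continuous_apply k).comp hγ.1)
  · intro k
    simp [cpath, Complex.conj_im, hγ.2 k]

/-- Concatenation of `α` with the reverse of `β` (requires `α 1 = β 1` for continuity). -/
def catRev (α β : PathC n) : PathC n := fun t =>
  if (t : ℝ) ≤ 1 / 2 then α (Set.projIcc 0 1 zero_le_one (2 * (t : ℝ)))
  else β (Set.projIcc 0 1 zero_le_one (2 - 2 * (t : ℝ)))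

lemma catRev_continuous {α β : PathC n} (hα : Continuous α) (hβ : Continuous β)
    (h1 : α 1 = β 1) : Continuous (catRev α β) := by
  apply Continuous.if_le
  · exact hα.comp (continuous_projIcc.comp (continuous_const.mul continuous_subtype_val))
  · exact hβ.comp (continuous_projIcc.comp
      (continuous_const.sub (continuous_const.mul continuous_subtype_val)))
  · exact continuous_subtype_val
  · exact continuous_const
  · intro t ht
    have h2 : 2 * (t : ℝ) = 1 := by rw [ht]; ring
    have h3 : 2 - 2 * (t : ℝ) = 1 := by rw [ht]; ring
    rw [h2, show (2:ℝ) - 1 = 1 by norm_num, Set.projIcc_right]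
    have h4 : (⟨(1:ℝ), right_mem_Icc.2 zero_le_one⟩ : unitInterval) = 1 := rfl
    rw [h4, h1]

lemma catRev_zero (α β : PathC n) : catRev α β 0 = α 0 := by
  have h0 : ((0 : unitInterval) : ℝ) = 0 := rfl
  rw [catRev, if_pos (by rw [h0]; norm_num)]
  rw [h0, mul_zero, Set.projIcc_left]
  rfl

lemma catRev_alpha {α β : PathC n} (s : unitInterval) (t : unitInterval)
    (ht : (t : ℝ) = (s : ℝ) / 2) : catRev α β t = α s := by
  rw [catRev, if_pos (by rw [ht]; linarith [s.2.2]), ht,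
    show 2 * ((s : ℝ) / 2) = (s : ℝ) by ring, Set.projIcc_of_mem zero_le_one s.2,
    Subtype.coe_eta]

lemma catRev_beta {α β : PathC n} (s : unitInterval) (hs : (s : ℝ) < 1) (t : unitInterval)
    (ht : (t : ℝ) = 1 - (s : ℝ) / 2) : catRev α β t = β s := by
  rw [catRev, if_neg (by rw [ht]; intro hcon; linarith), ht,
    show 2 - 2 * (1 - (s : ℝ) / 2) = (s : ℝ) by ring, Set.projIcc_of_mem zero_le_one s.2,
    Subtype.coe_eta]

lemma pathInSlice_catRev {Ω : Set (Fin n → ℍ[ℝ])} {α β : PathC n} (h1 : α 1 = β 1)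
    (I : ℍ[ℝ]) :
    pathInSlice Ω I (catRev α β) ↔ pathInSlice Ω I α ∧ pathInSlice Ω I β := by
  constructor
  · intro h
    constructor
    · intro s
      have hmem : (s : ℝ) / 2 ∈ Set.Icc (0:ℝ) 1 :=
        ⟨by linarith [s.2.1], by linarith [s.2.2]⟩
      have := h ⟨(s : ℝ) / 2, hmem⟩
      rwa [catRev_alpha s _ rfl] at this
    · intro s
      rcases lt_or_eq_of_le s.2.2 with hs | hs
      · have hmem : 1 - (s : ℝ) / 2 ∈ Set.Icc (0:ℝ) 1 :=
          ⟨by linarith [s.2.2], by linarith [s.2.1]⟩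
        have := h ⟨1 - (s : ℝ) / 2, hmem⟩
        rwa [catRev_beta s hs _ rfl] at this
      · have hs1 : s = 1 := Subtype.ext hs
        rw [hs1, ← h1]
        have hmem : (1 : ℝ) / 2 ∈ Set.Icc (0:ℝ) 1 := by norm_num
        have := h ⟨(1 : ℝ) / 2, hmem⟩
        rwa [catRev_alpha 1 _ (by norm_num)] at this
  · rintro ⟨hA, hB⟩ t
    rw [catRev]
    split
    · exact hA _
    · exact hB _

/-- Path-independence of the stem values on `𝒫(ℂⁿ, Ω₁)`. -/
lemma stem_path_indep {Ω₁ Ω₂ : Set (Fin n → ℍ[ℝ])} (hsp : StemPreserving Ω₁ Ω₂)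
    {f : (Fin n → ℍ[ℝ]) → ℍ[ℝ]} {F : PathC n → ℍ[ℝ] × ℍ[ℝ]} (hF : IsStem Ω₂ f F)
    {α β : PathC n} (hα : PathIn Ω₁ α) (hβ : PathIn Ω₁ β) (hαβ : α 1 = β 1)
    {L : ℍ[ℝ]} (hLα : L ∈ SGamma Ω₁ α) (hLβ : L ∈ SGamma Ω₁ β) :
    F α = F β := by
  set ρ := catRev α β with hρdef
  have hρ0 : ρ 0 = α 0 := catRev_zero α β
  have hρPath : PathIn Ω₁ ρ := by
    refine ⟨⟨catRev_continuous hα.1.1 hβ.1.1 hαβ, ?_⟩,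
      L, hLα.1, (pathInSlice_catRev hαβ L).2 ⟨hLα.2, hLβ.2⟩⟩
    intro k
    rw [hρ0]
    exact hα.1.2 k
  obtain ⟨J, hJ, J', hJ', hJJ'⟩ := hsp.1 ρ hρPath
  obtain ⟨hJA, hJB⟩ := (pathInSlice_catRev hαβ J).1 hJ.2
  obtain ⟨hJ'A, hJ'B⟩ := (pathInSlice_catRev hαβ J').1 hJ'.2
  have hαP2 : PathIn Ω₂ α := ⟨hα.1, J, hJ.1, hJA⟩
  have hβP2 : PathIn Ω₂ β := ⟨hβ.1, J, hJ.1, hJB⟩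
  have e1 : (F α).1 + J * (F α).2 = (F β).1 + J * (F β).2 := by
    rw [← hF α hαP2 J ⟨hJ.1, hJA⟩, ← hF β hβP2 J ⟨hJ.1, hJB⟩, hαβ]
  have e2 : (F α).1 + J' * (F α).2 = (F β).1 + J' * (F β).2 := by
    rw [← hF α hαP2 J' ⟨hJ'.1, hJ'A⟩, ← hF β hβP2 J' ⟨hJ'.1, hJ'B⟩, hαβ]
  obtain ⟨g1, g2⟩ := pair_eq_of_two hJJ' e1 e2
  exact Prod.ext g1 g2

/-- The stem of the conjugate path. -/
lemma stem_cpath {Ω₁ Ω₂ : Set (Fin n → ℍ[ℝ])} (hsp : StemPreserving Ω₁ Ω₂)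
    {f : (Fin n → ℍ[ℝ]) → ℍ[ℝ]} {F : PathC n → ℍ[ℝ] × ℍ[ℝ]} (hF : IsStem Ω₂ f F)
    {γ : PathC n} (hγ : PathIn Ω₁ γ) :
    F (cpath γ) = ((F γ).1, -(F γ).2) := by
  obtain ⟨J, hJ, J', hJ', hJJ'⟩ := hsp.1 γ hγ
  have hγ2 : PathIn Ω₂ γ := ⟨hγ.1, J, hJ⟩
  have hc2 : PathIn Ω₂ (cpath γ) :=
    ⟨isPathP_cpath hγ.1, -J, mem_sgamma_cpath.2 (by rwa [neg_neg])⟩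
  have key : ∀ M, M ∈ SGamma Ω₂ γ →
      (F (cpath γ)).1 + M * (-(F (cpath γ)).2) = (F γ).1 + M * (F γ).2 := by
    intro M hM
    have hMc : -M ∈ SGamma Ω₂ (cpath γ) := mem_sgamma_cpath.2 (by rwa [neg_neg])
    have h1 := hF (cpath γ) hc2 (-M) hMc
    have h2 := hF γ hγ2 M hM
    rw [psi_cpath, neg_neg] at h1
    rw [mul_neg, ← neg_mul, ← h1, ← h2]
  have e1 := key J hJ
  have e2 := key J' hJ'
  obtain ⟨g1, g2⟩ := pair_eq_of_two hJJ' e1 e2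
  refine Prod.ext g1 ?_
  simp only []
  rw [← g2, neg_neg]

end CSA


namespace CSA

variable {n : ℕ}

lemma psi_cpath' (I : ℍ[ℝ]) (γ : PathC n) (t : unitInterval) :
    psi (-I) (cpath γ t) = psi I (γ t) := by
  have h := psi_cpath (-I) γ t
  rwa [neg_neg] at h

end CSA


/-- the componentwise conjugate of the stem of `f` is a path-slice stem
function of `f^c_{Ω₁}`; in particular `f^c_{Ω₁}` is path-slice. -/
theorem conjStem_isStem {n : ℕ} (Ω₁ Ω₂ : Set (Fin n → ℍ[ℝ]))
    (h1 : Ω₁ ⊆ HSliceCone n) (h2 : Ω₂ ⊆ HSliceCone n)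
    (ho1 : SliceOpen Ω₁) (ho2 : SliceOpen Ω₂)
    (hrpc : RealPathConnected Ω₁) (hsp : StemPreserving Ω₁ Ω₂)
    (f : (Fin n → ℍ[ℝ]) → ℍ[ℝ]) (hf : SliceRegular Ω₂ f) :
    IsStem Ω₁ (sliceConj Ω₁ Ω₂ f)
        (fun γ => (star (stemOf Ω₂ f γ).1, star (stemOf Ω₂ f γ).2)) ∧
    PathSlice Ω₁ (sliceConj Ω₁ Ω₂ f) := by
  have hstem : IsStem Ω₂ f (stemOf Ω₂ f) := CSA.stemOf_spec ho2 hf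
  have main : IsStem Ω₁ (sliceConj Ω₁ Ω₂ f)
      (fun γ => (star (stemOf Ω₂ f γ).1, star (stemOf Ω₂ f γ).2)) := by
    intro γ hγ I hI
    simp only [sliceConj, scrF]
    by_cases hreal : ∀ k, IsRealQ (psi I (γ 1) k)
    · -- the endpoint is real
      rw [if_pos hreal]
      have hzim : ∀ k, (γ 1 k).im = 0 := fun k =>
        (CSA.isRealQ_psi_iff hI.1 (γ 1) k).1 (hreal k)
      have hfrak : frakI (psi I (γ 1)) = 0 := by
        rw [frakI, dif_pos hreal]
      obtain ⟨J, hJ, J', hJ', hJJ'⟩ := hsp.1 γ hγ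
      have hψJ : psi J (γ 1) = psi I (γ 1) := CSA.psi_real_eq (γ 1) hzim
      have hψJ' : psi J' (γ 1) = psi I (γ 1) := CSA.psi_real_eq (γ 1) hzim
      have e1 : f (psi I (γ 1)) + J * 0
          = (stemOf Ω₂ f γ).1 + J * (stemOf Ω₂ f γ).2 := by
        rw [mul_zero, add_zero, ← hψJ]
        exact hstem γ ⟨hγ.1, J, hJ⟩ J hJ
      have e2 : f (psi I (γ 1)) + J' * 0
          = (stemOf Ω₂ f γ).1 + J' * (stemOf Ω₂ f γ).2 := by
        rw [mul_zero, add_zero, ← hψJ']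
        exact hstem γ ⟨hγ.1, J', hJ'⟩ J' hJ'
      obtain ⟨g1, g2⟩ := CSA.pair_eq_of_two hJJ' e1 e2
      rw [hfrak, ← g1, ← g2]
      simp
    · -- the endpoint is not real
      rw [if_neg hreal]
      have hfrak := CSA.frakI_psi hI.1 (γ 1) hreal
      have hexists : ∃ δ : PathC n, PathIn Ω₁ δ ∧
          pathInSlice Ω₁ (frakI (psi I (γ 1))) δ ∧
          psi (frakI (psi I (γ 1))) (δ 1) = psi I (γ 1) := by
        rcases hfrak with hK | hK
        · rw [hK]
          exact ⟨γ, hγ, hI.2, rfl⟩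
        · rw [hK]
          exact ⟨CSA.cpath γ, ⟨CSA.isPathP_cpath hγ.1, -I, CSA.SQ_neg hI.1,
              fun t => by rw [CSA.psi_cpath' I γ t]; exact hI.2 t⟩,
            fun t => by rw [CSA.psi_cpath' I γ t]; exact hI.2 t,
            CSA.psi_cpath' I γ 1⟩
      set δ := Classical.epsilon (fun γ' : PathC n => PathIn Ω₁ γ' ∧
          pathInSlice Ω₁ (frakI (psi I (γ 1))) γ' ∧
          psi (frakI (psi I (γ 1))) (γ' 1) = psi I (γ 1)) with hδdef
      have hspec := Classical.epsilon_spec hexists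
      rw [← hδdef] at hspec
      obtain ⟨hδ1, hδ2, hδ3⟩ := hspec
      rcases hfrak with hK | hK
      · rw [hK] at hδ2 hδ3 ⊢
        have hend : δ 1 = γ 1 := CSA.psi_inj hI.1 hδ3
        have hFeq := CSA.stem_path_indep hsp hstem hδ1 hγ hend ⟨hI.1, hδ2⟩ hI
        rw [hFeq]
      · rw [hK] at hδ2 hδ3 ⊢
        have hcPath : PathIn Ω₁ (CSA.cpath γ) :=
          ⟨CSA.isPathP_cpath hγ.1, -I, CSA.SQ_neg hI.1,
            fun t => by rw [CSA.psi_cpath' I γ t]; exact hI.2 t⟩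
        have hcSlice : -I ∈ SGamma Ω₁ (CSA.cpath γ) := CSA.mem_sgamma_cpath.2 (by
          rw [neg_neg]; exact hI)
        have hend : δ 1 = CSA.cpath γ 1 :=
          CSA.psi_inj (CSA.SQ_neg hI.1) (hδ3.trans (CSA.psi_cpath' I γ 1).symm)
        have hFeq := CSA.stem_path_indep hsp hstem hδ1 hcPath hend
          ⟨CSA.SQ_neg hI.1, hδ2⟩ hcSlice
        have hFc := CSA.stem_cpath hsp hstem hγ
        rw [hFeq, hFc]
        simp [star_neg, neg_mul_neg]
  exact ⟨main, ⟨_, main⟩⟩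


end
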